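/- For fixed integers a_n, a_{n−1}, a_{n−2} with a_n ≠ 0 and n ≥ 2, there exist only finitely many polynomials f(X) = Σ_{i=0}^{n} a_i X^i ∈ ℤ[X] (with the prescribed top three coefficients) all of whose roots are real and distinct. -/

import Mathlib

open Polynomial Multiset

lemma my_esymm_one (s : Multiset ℝ) : s.esymm 1 = s.sum := by
  simp [Multiset.esymm, Multiset.powersetCard_one, Multiset.map_map]

lemma my_esymm_cons (a : ℝ) (s : Multiset ℝ) (k : ℕ) :
    (a ::ₘ s).esymm (k+1) = s.esymm (k+1) + a * s.esymm k := by
  simp only [Multiset.esymm, Multiset.powersetCard_cons, Multiset.map_add, Multiset.sum_add,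
    Multiset.map_map]
  congr 1
  rw [← Multiset.sum_map_mul_left]
  congr 1
  apply Multiset.map_congr rfl
  intro u _
  simp [Multiset.prod_cons]

lemma my_sum_sq (s : Multiset ℝ) :
    s.sum ^ 2 = (s.map (· ^ 2)).sum + 2 * s.esymm 2 := by
  induction s using Multiset.induction with
  | empty => simp [Multiset.esymm, Multiset.powersetCard_zero_right 1]
  | cons a s ih =>
    rw [Multiset.sum_cons, Multiset.map_cons, Multiset.sum_cons, my_esymm_cons,
      my_esymm_one]
    ring_nf
    ring_nf at ih
    linarith

lemma my_abs_prod_le (M : ℝ) (hM : 0 ≤ M) (u : Multiset ℝ) (h : ∀ x ∈ u, |x| ≤ M) :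
    |u.prod| ≤ M ^ Multiset.card u := by
  induction u using Multiset.induction with
  | empty => simp
  | cons a s ih =>
    rw [Multiset.prod_cons, abs_mul, Multiset.card_cons, pow_succ']
    exact mul_le_mul (h a (mem_cons_self a s)) (ih fun x hx => h x (mem_cons_of_mem hx))
      (abs_nonneg _) hM

lemma my_choose_le (n m : ℕ) : n.choose m ≤ 2 ^ n := by
  rcases le_or_gt m n with h | h
  · calc n.choose m ≤ ∑ k ∈ Finset.range (n+1), n.choose k :=
        Finset.single_le_sum (fun i _ => Nat.zero_le _) (Finset.mem_range.2 (by omega))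
      _ = 2 ^ n := Nat.sum_range_choose n
  · rw [Nat.choose_eq_zero_of_lt h]; exact Nat.zero_le _

lemma my_esymm_bound (s : Multiset ℝ) (M : ℝ) (hM : 1 ≤ M) (h : ∀ x ∈ s, |x| ≤ M)
    (m : ℕ) (hm : m ≤ Multiset.card s) :
    |s.esymm m| ≤ 2 ^ Multiset.card s * M ^ Multiset.card s := by
  have hM0 : 0 ≤ M := le_trans zero_le_one hM
  have h1 : ∀ y ∈ (s.powersetCard m).map Multiset.prod, |y| ≤ M ^ m := by
    intro y hy
    obtain ⟨u, hu, rfl⟩ := Multiset.mem_map.1 hy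
    obtain ⟨hus, hcard⟩ := Multiset.mem_powersetCard.1 hu
    calc |u.prod| ≤ M ^ Multiset.card u :=
        my_abs_prod_le M hM0 u (fun x hx => h x (Multiset.mem_of_le hus hx))
      _ = M ^ m := by rw [hcard]
  have h2 : ((Multiset.card s).choose m : ℝ) ≤ 2 ^ Multiset.card s := by
    calc ((Multiset.card s).choose m : ℝ) ≤ ((2 ^ Multiset.card s : ℕ) : ℝ) := by
          exact_mod_cast my_choose_le _ _
      _ = 2 ^ Multiset.card s := by push_cast; ring
  calc |s.esymm m| ≤ (((s.powersetCard m).map Multiset.prod).map abs).sum :=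
      Multiset.abs_sum_le_sum_abs
    _ ≤ Multiset.card (((s.powersetCard m).map Multiset.prod).map abs) • (M ^ m) := by
        apply Multiset.sum_le_card_nsmul
        intro x hx
        obtain ⟨y, hy, rfl⟩ := Multiset.mem_map.1 hx
        exact h1 y hy
    _ = ((Multiset.card s).choose m : ℝ) * M ^ m := by
        rw [Multiset.card_map, Multiset.card_map, Multiset.card_powersetCard, nsmul_eq_mul]
    _ ≤ 2 ^ Multiset.card s * M ^ Multiset.card s :=
        mul_le_mul h2 (pow_le_pow_right₀ hM hm) (by positivity) (by positivity)

set_option maxHeartbeats 1000000 in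
lemma my_coeff_bound (n : ℕ) (hn : 2 ≤ n) (an an1 an2 : ℤ) (han : an ≠ 0)
    (f : Polynomial ℤ) (hdeg : f.natDegree = n) (hcn : f.coeff n = an)
    (hc1 : f.coeff (n - 1) = an1) (hc2 : f.coeff (n - 2) = an2)
    (hcard : Multiset.card ((f.map (Int.castRingHom ℝ)).roots) = n) (k : ℕ) :
    |f.coeff k| ≤ |an| * 2 ^ n * (an1 ^ 2 + 2 * |an2| + 1) ^ n := by
  have hM1 : (1:ℝ) ≤ (an1 : ℝ) ^ 2 + 2 * |(an2 : ℝ)| + 1 := by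
    nlinarith [sq_nonneg (an1:ℝ), abs_nonneg ((an2:ℝ))]
  obtain ⟨M, hMdef⟩ : ∃ M : ℝ, M = (an1 : ℝ) ^ 2 + 2 * |(an2 : ℝ)| + 1 := ⟨_, rfl⟩
  rw [← hMdef] at hM1
  obtain ⟨p, hp⟩ : ∃ p : Polynomial ℝ, p = f.map (Int.castRingHom ℝ) := ⟨_, rfl⟩
  rw [← hp] at hcard
  have hpdeg : p.natDegree = n := by
    rw [hp, natDegree_map_eq_of_injective Int.cast_injective f, hdeg]
  have hlead : p.leadingCoeff = (an : ℝ) := by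
    rw [Polynomial.leadingCoeff, hpdeg, hp, Polynomial.coeff_map, hcn]; rfl
  have hroots : Multiset.card p.roots = p.natDegree := by rw [hpdeg]; exact hcard
  have han' : (an : ℝ) ≠ 0 := Int.cast_ne_zero.2 han
  -- Vieta for coefficient n-1
  have hv1 := Polynomial.coeff_eq_esymm_roots_of_card hroots (k := n - 1)
    (by rw [hpdeg]; omega)
  rw [hpdeg, hlead] at hv1
  have hn1 : n - (n - 1) = 1 := by omega
  rw [hn1] at hv1
  have hpc1 : p.coeff (n - 1) = (an1 : ℝ) := by
    rw [hp, Polynomial.coeff_map, hc1]; rfl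
  rw [hpc1, my_esymm_one] at hv1
  -- Vieta for coefficient n-2
  have hv2 := Polynomial.coeff_eq_esymm_roots_of_card hroots (k := n - 2)
    (by rw [hpdeg]; omega)
  rw [hpdeg, hlead] at hv2
  have hn2 : n - (n - 2) = 2 := by omega
  rw [hn2] at hv2
  have hpc2 : p.coeff (n - 2) = (an2 : ℝ) := by
    rw [hp, Polynomial.coeff_map, hc2]; rfl
  rw [hpc2] at hv2
  -- sum of squares of roots
  have hsq := my_sum_sq p.roots
  have hane : (1:ℝ) ≤ |(an : ℝ)| := by
    have h1 : (1:ℤ) ≤ |an| := Int.one_le_abs han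
    calc (1:ℝ) ≤ ((|an| : ℤ) : ℝ) := by exact_mod_cast h1
      _ = |(an : ℝ)| := by push_cast; ring
  have hsum_eq : p.roots.sum = -(an1 : ℝ) / an := by
    field_simp at hv1 ⊢
    linarith [hv1]
  have he2_eq : p.roots.esymm 2 = (an2 : ℝ) / an := by
    field_simp at hv2 ⊢
    linarith [hv2]
  have hsq_bound : (p.roots.map (· ^ 2)).sum ≤ (an1 : ℝ) ^ 2 + 2 * |(an2 : ℝ)| := by
    have h1 : p.roots.sum ^ 2 ≤ (an1 : ℝ) ^ 2 := by
      rw [hsum_eq, div_pow]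
      rw [div_le_iff₀ (by positivity)]
      have h2 : (1:ℝ) ≤ (an:ℝ)^2 := by
        nlinarith [abs_nonneg (an:ℝ), sq_abs (an:ℝ)]
      nlinarith [sq_nonneg (an1:ℝ)]
    have h2 : -(2 * p.roots.esymm 2) ≤ 2 * |(an2 : ℝ)| := by
      rw [he2_eq]
      have h3 : |(an2:ℝ)/an| ≤ |(an2:ℝ)| := by
        rw [abs_div]
        rcases eq_or_ne an2 0 with rfl|h
        · simp
        · rw [div_le_iff₀ (by positivity)]
          nlinarith [abs_nonneg (an2:ℝ)]
      have h4 := neg_abs_le ((an2:ℝ)/an)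
      linarith [abs_nonneg ((an2:ℝ)/an)]
    linarith [hsq]
  -- each root is bounded by M
  have hroot_bound : ∀ r ∈ p.roots, |r| ≤ M := by
    intro r hr
    have hmem : r ^ 2 ∈ p.roots.map (· ^ 2) := Multiset.mem_map_of_mem _ hr
    have hle : r ^ 2 ≤ (p.roots.map (· ^ 2)).sum :=
      Multiset.single_le_sum (fun x hx => by
        obtain ⟨y, _, rfl⟩ := Multiset.mem_map.1 hx; positivity) _ hmem
    rcases le_total |r| 1 with h | h
    · linarith
    · have h5 : |r| ≤ r ^ 2 := by nlinarith [abs_nonneg r, sq_abs r]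
      rw [hMdef]; nlinarith
  -- bound the coefficient
  have hBcast : ((|an| * 2 ^ n * (an1 ^ 2 + 2 * |an2| + 1) ^ n : ℤ) : ℝ)
      = |(an : ℝ)| * 2 ^ n * M ^ n := by
    rw [hMdef]; push_cast; ring
  rcases le_or_gt k n with hk | hk
  · have hv := Polynomial.coeff_eq_esymm_roots_of_card hroots (k := k)
      (by rw [hpdeg]; omega)
    rw [hpdeg, hlead] at hv
    have hpck : p.coeff k = (f.coeff k : ℝ) := by
      rw [hp, Polynomial.coeff_map]; rfl
    rw [hpck] at hv
    have hcard2 : Multiset.card p.roots = n := hcard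
    have hb := my_esymm_bound p.roots M hM1 hroot_bound (n - k) (by rw [hcard2]; omega)
    rw [hcard2] at hb
    have habs : |(f.coeff k : ℝ)| ≤ |(an : ℝ)| * 2 ^ n * M ^ n := by
      rw [hv, abs_mul, abs_mul, abs_pow, abs_neg, abs_one, one_pow, mul_one]
      rw [mul_assoc]
      apply mul_le_mul_of_nonneg_left hb (abs_nonneg _)
    rw [← hBcast] at habs
    have : |(f.coeff k : ℝ)| = ((|f.coeff k| : ℤ) : ℝ) := by push_cast; ring
    rw [this] at habs
    exact_mod_cast habs
  · rw [Polynomial.coeff_eq_zero_of_natDegree_lt (by omega : f.natDegree < k)]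
    simp only [abs_zero]
    have h0 : (0:ℝ) ≤ |(an : ℝ)| * 2 ^ n * M ^ n := by positivity
    rw [← hBcast] at h0
    exact_mod_cast h0

/-- For fixed top three integer coefficients `aₙ ≠ 0, aₙ₋₁, aₙ₋₂` there are only
finitely many integer polynomials of degree `n` with these leading coefficients all of whose
roots are real and distinct (totally real separable polynomials). -/
theorem finite_totally_real_separable_with_fixed_top_coeffs
    (n : ℕ) (hn : 2 ≤ n) (an an1 an2 : ℤ) (han : an ≠ 0) :
    {f : Polynomial ℤ | f.natDegree = n ∧ f.coeff n = an ∧ f.coeff (n - 1) = an1 ∧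
      f.coeff (n - 2) = an2 ∧
      ((f.map (Int.castRingHom ℝ)).roots).card = n ∧
      (f.map (Int.castRingHom ℝ)).roots.Nodup}.Finite := by
  set B : ℤ := |an| * 2 ^ n * (an1 ^ 2 + 2 * |an2| + 1) ^ n with hBdef
  apply Set.Finite.of_finite_image (f := fun f : Polynomial ℤ => fun i : Fin (n+1) => f.coeff i)
  · apply Set.Finite.subset (Set.Finite.pi (fun _ : Fin (n+1) => Set.finite_Icc (-B) B))
    rintro _ ⟨f, hf, rfl⟩
    intro i _
    obtain ⟨hdeg, hcn, hc1, hc2, hcard, -⟩ := hf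
    have := my_coeff_bound n hn an an1 an2 han f hdeg hcn hc1 hc2 hcard i
    simp only [Set.mem_Icc]
    constructor <;> [linarith [neg_abs_le (f.coeff i)]; linarith [le_abs_self (f.coeff i)]]
  · intro f hf g hg hfg
    apply Polynomial.ext
    intro k
    rcases le_or_gt k n with hk | hk
    · exact congrFun hfg ⟨k, by omega⟩
    · rw [Polynomial.coeff_eq_zero_of_natDegree_lt (by rw [hf.1]; omega),
        Polynomial.coeff_eq_zero_of_natDegree_lt (by rw [hg.1]; omega)]
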